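/- Let 0 < α < 1/M, β > 0 and d ∈ ℝ^N with d_m > 0 for all m. Then the map x ↦ F(x) − β d has a unique fixed point x̂^∞ ∈ ℝ^N, and for every initial value x̂_0 ∈ ℝ^N the sequence defined by x̂_i = F(x̂_{i−1}) − β d converges to x̂^∞ as i → ∞. -/

import Mathlib

open Finset Filter Real


/-- One-step cone bounds for the positive map `w ↦ g ∘ (c w + α (∑ w))` with Perron
eigenvector `vst` and eigenvalue `lam`. -/
lemma abHMM.step_bounds {ι : Type*} [Fintype ι] (c α lam a b : ℝ) (g vst w : ι → ℝ)
    (hc : 0 < c) (hα : 0 < α)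
    (hg : ∀ o, 0 < g o) (hg1 : ∀ o, g o ≤ 1) (hv : ∀ o, 0 < vst o)
    (hkey : ∀ o, (lam - c * g o) * vst o = g o) (hsec : α * ∑ o, vst o = 1)
    (hwl : ∀ o, a * vst o ≤ w o) (hwu : ∀ o, w o ≤ b * vst o) (o : ι) :
    (a * lam + (lam - c) * (α * (∑ o', w o') - a)) * vst o
        ≤ g o * (c * w o + α * ∑ o', w o') ∧
    g o * (c * w o + α * ∑ o', w o')
        ≤ (b * lam - (lam - c) * (b - α * ∑ o', w o')) * vst o := by
  have hσl : a ≤ α * ∑ o', w o' := by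
    have h1 : ∑ o', a * vst o' ≤ ∑ o', w o' := Finset.sum_le_sum fun o' _ => hwl o'
    have h2 : α * ∑ o', a * vst o' = a := by
      rw [← Finset.mul_sum]; linear_combination a * hsec
    nlinarith [mul_le_mul_of_nonneg_left h1 hα.le]
  have hσu : α * ∑ o', w o' ≤ b := by
    have h1 : ∑ o', w o' ≤ ∑ o', b * vst o' := Finset.sum_le_sum fun o' _ => hwu o'
    have h2 : α * ∑ o', b * vst o' = b := by
      rw [← Finset.mul_sum]; linear_combination b * hsec
    nlinarith [mul_le_mul_of_nonneg_left h1 hα.le]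
  have hz : 0 ≤ w o - a * vst o := by linarith [hwl o]
  have hz' : 0 ≤ b * vst o - w o := by linarith [hwu o]
  have hId : g o * (c * w o + α * ∑ o', w o')
      = (α * ∑ o', w o') * lam * vst o + c * g o * (w o - a * vst o)
        - c * g o * ((α * ∑ o', w o') - a) * vst o := by
    linear_combination (-(α * ∑ o', w o')) * hkey o
  have h₁ : 0 ≤ c * g o * (w o - a * vst o) :=
    mul_nonneg (mul_nonneg hc.le (hg o).le) hz
  have h₁' : 0 ≤ c * g o * (b * vst o - w o) :=
    mul_nonneg (mul_nonneg hc.le (hg o).le) hz'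
  have h₂ : 0 ≤ c * (1 - g o) * (((α * ∑ o', w o') - a) * vst o) :=
    mul_nonneg (mul_nonneg hc.le (by linarith [hg1 o]))
      (mul_nonneg (by linarith) (hv o).le)
  have h₂' : 0 ≤ c * (1 - g o) * ((b - α * ∑ o', w o') * vst o) :=
    mul_nonneg (mul_nonneg hc.le (by linarith [hg1 o]))
      (mul_nonneg (by linarith) (hv o).le)
  constructor
  · nlinarith [hId, h₁, h₂]
  · nlinarith [hId, h₁', h₂']

/-- Power iteration for the positive map converges in ratio to the Perron eigenvector. -/
lemma abHMM.core {ι : Type} [Fintype ι] [Nonempty ι] (c α lam : ℝ) (g vst : ι → ℝ)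
    (hc : 0 < c) (hα : 0 < α) (hlam : 0 < lam) (hclam : c < lam)
    (hg : ∀ o, 0 < g o) (hg1 : ∀ o, g o ≤ 1) (hv : ∀ o, 0 < vst o)
    (hkey : ∀ o, (lam - c * g o) * vst o = g o) (hsec : α * ∑ o, vst o = 1)
    (u : ℕ → ι → ℝ) (hu0 : ∀ o, 0 < u 0 o)
    (huS : ∀ i o, u (i + 1) o = g o * (c * u i o + α * ∑ o', u i o') / lam) :
    ∃ L : ℝ, 0 < L ∧ ∀ o, Tendsto (fun i => u i o) atTop (nhds (L * vst o)) := by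
  have hupos : ∀ i o, 0 < u i o := by
    intro i
    induction i with
    | zero => exact hu0
    | succ i ih =>
      intro o
      rw [huS]
      have hS : 0 < ∑ o', u i o' := Finset.sum_pos (fun o' _ => ih o') Finset.univ_nonempty
      exact div_pos (mul_pos (hg o) (add_pos (mul_pos hc (ih o)) (mul_pos hα hS))) hlam
  set A : ℕ → ℝ := fun i => Finset.univ.inf' Finset.univ_nonempty (fun o => u i o / vst o) with hA
  set B : ℕ → ℝ := fun i => Finset.univ.sup' Finset.univ_nonempty (fun o => u i o / vst o) with hB
  have hAle0 : ∀ i o, A i ≤ u i o / vst o := by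
    intro i o
    simp only [hA]
    exact Finset.inf'_le (fun o => u i o / vst o) (Finset.mem_univ o)
  have hleB0 : ∀ i o, u i o / vst o ≤ B i := by
    intro i o
    simp only [hB]
    exact Finset.le_sup' (fun o => u i o / vst o) (Finset.mem_univ o)
  have hAle : ∀ i o, A i * vst o ≤ u i o := fun i o => (le_div_iff₀ (hv o)).1 (hAle0 i o)
  have hleB : ∀ i o, u i o ≤ B i * vst o := fun i o => (div_le_iff₀ (hv o)).1 (hleB0 i o)
  have hAB : ∀ i, A i ≤ B i := fun i =>
    le_trans (hAle0 i (Classical.arbitrary ι)) (hleB0 i (Classical.arbitrary ι))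
  -- the scalar bounds for each step
  have hstep : ∀ i,
      (A i + (1 - c / lam) * (α * (∑ o', u i o') - A i) ≤ A (i + 1)) ∧
      (B (i + 1) ≤ B i - (1 - c / lam) * (B i - α * ∑ o', u i o')) := by
    intro i
    have hsb := fun o => abHMM.step_bounds c α lam (A i) (B i) g vst (u i) hc hα hg hg1 hv
      hkey hsec (hAle i) (hleB i) o
    constructor
    · simp only [hA]
      apply Finset.le_inf' Finset.univ_nonempty
      intro o _
      rw [le_div_iff₀ (hv o), huS, le_div_iff₀ hlam]
      calc (A i + (1 - c / lam) * (α * (∑ o', u i o') - A i)) * vst o * lam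
          = (A i * lam + (lam - c) * (α * (∑ o', u i o') - A i)) * vst o := by
            field_simp
        _ ≤ g o * (c * u i o + α * ∑ o', u i o') := (hsb o).1
    · simp only [hB]
      apply Finset.sup'_le Finset.univ_nonempty
      intro o _
      rw [div_le_iff₀ (hv o), huS, div_le_iff₀ hlam]
      calc g o * (c * u i o + α * ∑ o', u i o')
          ≤ (B i * lam - (lam - c) * (B i - α * ∑ o', u i o')) * vst o := (hsb o).2
        _ = (B i - (1 - c / lam) * (B i - α * ∑ o', u i o')) * vst o * lam := by
            field_simp
  -- σ bounds
  have hσ : ∀ i, A i ≤ α * ∑ o', u i o' ∧ α * ∑ o', u i o' ≤ B i := by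
    intro i
    constructor
    · have h1 : ∑ o', A i * vst o' ≤ ∑ o', u i o' := Finset.sum_le_sum fun o' _ => hAle i o'
      have h2 : α * ∑ o', A i * vst o' = A i := by
        rw [← Finset.mul_sum]; linear_combination A i * hsec
      nlinarith [mul_le_mul_of_nonneg_left h1 hα.le]
    · have h1 : ∑ o', u i o' ≤ ∑ o', B i * vst o' := Finset.sum_le_sum fun o' _ => hleB i o'
      have h2 : α * ∑ o', B i * vst o' = B i := by
        rw [← Finset.mul_sum]; linear_combination B i * hsec
      nlinarith [mul_le_mul_of_nonneg_left h1 hα.le]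
  have hκ0 : 0 ≤ c / lam := div_nonneg hc.le hlam.le
  have hκ1 : c / lam < 1 := (div_lt_one hlam).2 hclam
  have hAmono : ∀ i, A i ≤ A (i + 1) := by
    intro i
    have h := (hstep i).1
    have h2 := (hσ i).1
    nlinarith
  have hBmono : ∀ i, B (i + 1) ≤ B i := by
    intro i
    have h := (hstep i).2
    have h2 := (hσ i).2
    nlinarith
  have hgap1 : ∀ i, B (i + 1) - A (i + 1) ≤ (c / lam) * (B i - A i) := by
    intro i
    have h1 := (hstep i).1
    have h2 := (hstep i).2
    nlinarith
  have hgap : ∀ i, B i - A i ≤ (c / lam) ^ i * (B 0 - A 0) := by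
    intro i
    induction i with
    | zero => simp
    | succ i ih =>
      calc B (i + 1) - A (i + 1) ≤ (c / lam) * (B i - A i) := hgap1 i
        _ ≤ (c / lam) * ((c / lam) ^ i * (B 0 - A 0)) := by
            exact mul_le_mul_of_nonneg_left ih hκ0
        _ = (c / lam) ^ (i + 1) * (B 0 - A 0) := by ring
  have hAm : Monotone A := monotone_nat_of_le_succ hAmono
  have hBanti : Antitone B := antitone_nat_of_succ_le hBmono
  have hbdd : BddAbove (Set.range A) := by
    refine ⟨B 0, ?_⟩
    rintro x ⟨i, rfl⟩
    exact le_trans (hAB i) (hBanti (Nat.zero_le i))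
  have hAt : Tendsto A atTop (nhds (⨆ i, A i)) := tendsto_atTop_ciSup hAm hbdd
  set L : ℝ := ⨆ i, A i with hLdef
  have hA0pos : 0 < A 0 := by
    obtain ⟨o, -, ho⟩ := Finset.exists_mem_eq_inf' (Finset.univ_nonempty)
      (fun o => u 0 o / vst o)
    rw [hA]
    simp only []
    rw [ho]
    exact div_pos (hu0 o) (hv o)
  have hL : 0 < L := lt_of_lt_of_le hA0pos (le_ciSup hbdd 0)
  have hdiff0 : Tendsto (fun i => B i - A i) atTop (nhds 0) := by
    have hp : Tendsto (fun i : ℕ => (c / lam) ^ i * (B 0 - A 0)) atTop (nhds 0) := by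
      have := (tendsto_pow_atTop_nhds_zero_of_lt_one hκ0 hκ1).mul_const (B 0 - A 0)
      simpa using this
    exact squeeze_zero (fun i => by linarith [hAB i]) hgap hp
  have hBt : Tendsto B atTop (nhds L) := by
    have := hAt.add hdiff0
    simp only [add_zero] at this
    exact this.congr fun i => by ring
  refine ⟨L, hL, fun o => ?_⟩
  have hro : Tendsto (fun i => u i o / vst o) atTop (nhds L) := by
    apply tendsto_of_tendsto_of_tendsto_of_le_of_le hAt hBt
    · intro i; exact hAle0 i o
    · intro i; exact hleB0 i o
  have := hro.mul_const (vst o)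
  refine this.congr fun i => ?_
  exact div_mul_cancel₀ _ (ne_of_gt (hv o))

/-- The αβ-HMM log-belief-ratio mapping `F`, defined componentwise for `m = 1, …, M-1` by
`F_m(x) = log(((1 - αM)·exp(x_m) + α + α·Σ_n exp(x_n)) / (1 - αM + α + α·Σ_n exp(x_n)))`. -/
noncomputable def abHMM.F (α : ℝ) (M : ℕ) (x : Fin (M - 1) → ℝ) : Fin (M - 1) → ℝ :=
  fun m => Real.log (((1 - α * M) * Real.exp (x m) + α + α * ∑ n, Real.exp (x n)) /
    (1 - α * M + α + α * ∑ n, Real.exp (x n)))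

/-- Theorem 1, convergence part: for `0 < α < 1/M`, `β > 0` and `d > 0`
componentwise, the map `x ↦ F(x) - β d` has a unique fixed point `x̂^∞`, and every
trajectory of the reference dynamical system `x̂_i = F(x̂_{i-1}) - β d` (with arbitrary
initial value `x̂_0`) converges to `x̂^∞`. -/
theorem abHMM_reference_system_converges (M : ℕ) (hM : 2 ≤ M) (α β : ℝ)
    (hα : 0 < α) (hα' : α < 1 / M) (hβ : 0 < β)
    (d : Fin (M - 1) → ℝ) (hd : ∀ m, 0 < d m) :
    ∃ xinf : Fin (M - 1) → ℝ,
      (xinf = fun m => abHMM.F α M xinf m - β * d m) ∧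
      (∀ y : Fin (M - 1) → ℝ, (y = fun m => abHMM.F α M y m - β * d m) → y = xinf) ∧
      (∀ xh : ℕ → Fin (M - 1) → ℝ,
        (∀ i : ℕ, xh (i + 1) = fun m => abHMM.F α M (xh i) m - β * d m) →
        Filter.Tendsto xh Filter.atTop (nhds xinf)) := by
  classical
  have hM0 : (0:ℝ) < (M:ℝ) := by
    have : (0:ℕ) < M := by omega
    exact_mod_cast this
  have hαM : α * (M:ℝ) < 1 := by
    rw [lt_div_iff₀ hM0] at hα'
    exact hα'
  set c : ℝ := 1 - α * (M:ℝ) with hcdef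
  have hc : 0 < c := by rw [hcdef]; linarith
  set g : Option (Fin (M-1)) → ℝ := fun o => Option.elim o 1 (fun m => Real.exp (-(β * d m)))
    with hgdef
  have hgnone : g none = 1 := rfl
  have hgsome : ∀ m, g (some m) = Real.exp (-(β * d m)) := fun m => rfl
  have hg : ∀ o, 0 < g o := by
    intro o
    cases o with
    | none => rw [hgnone]; norm_num
    | some m => rw [hgsome]; positivity
  have hg1 : ∀ o, g o ≤ 1 := by
    intro o
    cases o with
    | none => rw [hgnone]
    | some m =>
      rw [hgsome, Real.exp_le_one_iff]
      nlinarith [hd m]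
  have hSg : 1 ≤ ∑ o, g o := by
    rw [Fintype.sum_option]
    have h1 : (0:ℝ) ≤ ∑ m, g (some m) := Finset.sum_nonneg fun m _ => (hg (some m)).le
    rw [hgnone]; linarith
  -- solve the secular equation by the intermediate value theorem
  have hden : ∀ lam ∈ Set.Icc (c + α) (c + α * ∑ o, g o), ∀ o, 0 < lam - c * g o := by
    intro lam hlam o
    have h1 := hlam.1
    nlinarith [hg1 o, hg o]
  have hab : c + α ≤ c + α * ∑ o, g o := by nlinarith
  have hcont : ContinuousOn (fun lam => α * ∑ o, g o / (lam - c * g o))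
      (Set.Icc (c + α) (c + α * ∑ o, g o)) := by
    apply ContinuousOn.mul continuousOn_const
    apply continuousOn_finset_sum
    intro o _
    exact ContinuousOn.div continuousOn_const (continuousOn_id.sub continuousOn_const)
      (fun lam hlam => (hden lam hlam o).ne')
  have hφa : 1 ≤ α * ∑ o, g o / ((c + α) - c * g o) := by
    have h1 : g none / ((c + α) - c * g none) = 1 / α := by
      rw [hgnone]; ring_nf
    have hsingle : g none / ((c + α) - c * g none) ≤ ∑ o, g o / ((c + α) - c * g o) :=
      Finset.single_le_sum
        (f := fun o => g o / ((c + α) - c * g o))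
        (fun o _ => div_nonneg (hg o).le (hden (c + α) ⟨le_refl _, hab⟩ o).le)
        (Finset.mem_univ none)
    rw [h1] at hsingle
    have h2 := mul_le_mul_of_nonneg_left hsingle hα.le
    calc (1:ℝ) = α * (1 / α) := by field_simp
      _ ≤ α * ∑ o, g o / ((c + α) - c * g o) := h2
  have hSgpos : 0 < ∑ o, g o := by linarith
  have hφb : α * ∑ o, g o / ((c + α * ∑ o', g o') - c * g o) ≤ 1 := by
    have hterm : ∀ o, g o / ((c + α * ∑ o', g o') - c * g o) ≤ g o / (α * ∑ o', g o') := by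
      intro o
      apply div_le_div_of_nonneg_left (hg o).le (mul_pos hα hSgpos)
      nlinarith [hg1 o, hg o]
    calc α * ∑ o, g o / ((c + α * ∑ o', g o') - c * g o)
        ≤ α * ∑ o, g o / (α * ∑ o', g o') :=
          mul_le_mul_of_nonneg_left (Finset.sum_le_sum fun o _ => hterm o) hα.le
      _ = 1 := by
          rw [← Finset.sum_div, mul_div_assoc']
          exact div_self (ne_of_gt (mul_pos hα hSgpos))
  have hIVT := intermediate_value_Icc' hab hcont
  have h1mem : (1:ℝ) ∈ Set.Icc ((fun lam => α * ∑ o, g o / (lam - c * g o))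
      (c + α * ∑ o, g o)) ((fun lam => α * ∑ o, g o / (lam - c * g o)) (c + α)) := by
    simp only []
    exact ⟨hφb, hφa⟩
  obtain ⟨lam, hlamIcc, hφlam⟩ := hIVT h1mem
  simp only [] at hφlam
  have hlamge : c + α ≤ lam := hlamIcc.1
  have hlampos : 0 < lam := by linarith
  have hclam : c < lam := by linarith
  have hdlam : ∀ o, 0 < lam - c * g o := hden lam hlamIcc
  set vst : Option (Fin (M-1)) → ℝ := fun o => g o / (lam - c * g o) with hvdef
  have hv : ∀ o, 0 < vst o := fun o => div_pos (hg o) (hdlam o)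
  have hkey : ∀ o, (lam - c * g o) * vst o = g o := by
    intro o
    rw [hvdef]
    field_simp
    exact mul_div_cancel_right₀ _ (hdlam o).ne'
  have hsec : α * ∑ o, vst o = 1 := hφlam
  have heig : ∀ o, g o * (c * vst o + α * ∑ o', vst o') = lam * vst o := by
    intro o
    linear_combination g o * hsec - hkey o
  set xinf : Fin (M-1) → ℝ := fun m => Real.log (vst (some m) / vst none) with hxinfdef
  -- the key algebraic conjugacy
  have halg : ∀ w : Option (Fin (M-1)) → ℝ, (∀ o, 0 < w o) → ∀ x : Fin (M-1) → ℝ,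
      (∀ m, x m = Real.log (w (some m) / w none)) →
      ∀ m, abHMM.F α M x m - β * d m
        = Real.log (g (some m) * (c * w (some m) + α * ∑ o, w o)
            / (g none * (c * w none + α * ∑ o, w o))) := by
    intro w hwpos x hx m
    have hw0 : 0 < w none := hwpos none
    have hS : 0 < ∑ o, w o := Finset.sum_pos (fun o _ => hwpos o) Finset.univ_nonempty
    have hexp : ∀ n, Real.exp (x n) = w (some n) / w none := fun n => by
      rw [hx n, Real.exp_log (div_pos (hwpos _) hw0)]
    have hnum : 0 < c * w (some m) + α * ∑ o, w o :=
      add_pos (mul_pos hc (hwpos _)) (mul_pos hα hS)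
    have hden' : 0 < c * w none + α * ∑ o, w o :=
      add_pos (mul_pos hc hw0) (mul_pos hα hS)
    have hsum : ∑ n, Real.exp (x n) = (∑ o, w o - w none) / w none := by
      simp only [hexp]
      rw [Fintype.sum_option, add_sub_cancel_left]
      exact (Finset.sum_div _ _ _).symm
    have harg : ((1 - α * (M:ℝ)) * Real.exp (x m) + α + α * ∑ n, Real.exp (x n)) /
        (1 - α * (M:ℝ) + α + α * ∑ n, Real.exp (x n))
        = (c * w (some m) + α * ∑ o, w o) / (c * w none + α * ∑ o, w o) := by
      have e1 : (1 - α * (M:ℝ)) * (w (some m) / w none) + α + α * ((∑ o, w o - w none) / w none)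
          = (c * w (some m) + α * ∑ o, w o) / w none := by
        rw [hcdef]
        field_simp
        ring
      have e2 : 1 - α * (M:ℝ) + α + α * ((∑ o, w o - w none) / w none)
          = (c * w none + α * ∑ o, w o) / w none := by
        rw [hcdef]
        field_simp
        ring
      rw [hexp m, hsum, e1, e2, div_div_div_cancel_right₀ (ne_of_gt hw0)]
    have hFm : abHMM.F α M x m
        = Real.log ((c * w (some m) + α * ∑ o, w o) / (c * w none + α * ∑ o, w o)) := by
      simp only [abHMM.F]
      rw [harg]
    rw [hFm, hgsome m, hgnone, one_mul, mul_div_assoc,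
      Real.log_mul (Real.exp_ne_zero _) (ne_of_gt (div_pos hnum hden')), Real.log_exp]
    ring
  -- fixed point property
  have hfix : xinf = fun m => abHMM.F α M xinf m - β * d m := by
    funext m
    have h := halg vst hv xinf (fun m' => rfl) m
    show xinf m = abHMM.F α M xinf m - β * d m
    rw [h, heig (some m), heig none, mul_div_mul_left _ _ (ne_of_gt hlampos)]
  -- convergence of all trajectories
  have hconv : ∀ xh : ℕ → Fin (M-1) → ℝ,
      (∀ i, xh (i+1) = fun m => abHMM.F α M (xh i) m - β * d m) →
      Filter.Tendsto xh Filter.atTop (nhds xinf) := by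
    intro xh hxh
    set u : ℕ → Option (Fin (M-1)) → ℝ := fun i => Nat.rec
      (fun o => Option.elim o 1 (fun m => Real.exp (xh 0 m)))
      (fun _ w o => g o * (c * w o + α * ∑ o', w o') / lam) i with hudef
    have hu0 : ∀ o, u 0 o = Option.elim o 1 (fun m => Real.exp (xh 0 m)) := fun o => rfl
    have huS : ∀ i o, u (i+1) o = g o * (c * u i o + α * ∑ o', u i o') / lam :=
      fun i o => rfl
    have hu0pos : ∀ o, 0 < u 0 o := by
      intro o
      rw [hu0]
      cases o with
      | none => norm_num
      | some m => simpa using Real.exp_pos (xh 0 m)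
    have hupos : ∀ i o, 0 < u i o := by
      intro i
      induction i with
      | zero => exact hu0pos
      | succ i ih =>
        intro o
        rw [huS]
        have hS : 0 < ∑ o', u i o' := Finset.sum_pos (fun o' _ => ih o') Finset.univ_nonempty
        exact div_pos (mul_pos (hg o) (add_pos (mul_pos hc (ih o)) (mul_pos hα hS))) hlampos
    obtain ⟨L, hL, hU⟩ := abHMM.core c α lam g vst hc hα hlampos hclam hg hg1 hv hkey hsec
      u hu0pos huS
    have hlog : ∀ i m, xh i m = Real.log (u i (some m) / u i none) := by
      intro i
      induction i with
      | zero =>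
        intro m
        show xh 0 m = Real.log (Real.exp (xh 0 m) / 1)
        rw [div_one, Real.log_exp]
      | succ i ih =>
        intro m
        have h1 : xh (i+1) m = abHMM.F α M (xh i) m - β * d m := by rw [hxh i]
        rw [h1, halg (u i) (hupos i) (xh i) ih m, huS i (some m), huS i none]
        congr 1
        exact (div_div_div_cancel_right₀ (ne_of_gt hlampos) _ _).symm
    rw [tendsto_pi_nhds]
    intro m
    have hdiv : Filter.Tendsto (fun i => u i (some m) / u i none) Filter.atTop
        (nhds ((L * vst (some m)) / (L * vst none))) :=
      (hU (some m)).div (hU none) (ne_of_gt (mul_pos hL (hv none)))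
    rw [mul_div_mul_left _ _ (ne_of_gt hL)] at hdiv
    have hlog' : Filter.Tendsto (fun i => Real.log (u i (some m) / u i none)) Filter.atTop
        (nhds (Real.log (vst (some m) / vst none))) :=
      (Real.continuousAt_log (ne_of_gt (div_pos (hv _) (hv none)))).tendsto.comp hdiv
    exact hlog'.congr fun i => (hlog i m).symm
  refine ⟨xinf, hfix, ?_, hconv⟩
  intro y hy
  have h1 : Filter.Tendsto (fun _ : ℕ => y) Filter.atTop (nhds xinf) :=
    hconv (fun _ => y) (fun i => hy)
  exact tendsto_nhds_unique tendsto_const_nhds h1
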